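/- arXiv:1008.3748 — 4 statements merged into one kernel-verified Lean document; each statement's English description precedes it below -/
import Mathlib

section
/- Let Ω be a compact Hausdorff topological space. If every C*-subalgebra of C(Ω, ℂ) (i.e., every closed star-subalgebra of the C*-algebra of continuous complex-valued functions on Ω) has property (FS), then Ω is a scattered topological space. -/
/-- A topological space is scattered if every nonempty subset contains a point
isolated in the subspace topology. -/
def IsScatteredSpace (X : Type*) [TopologicalSpace X] : Prop :=
  ∀ S : Set X, S.Nonempty → ∃ x ∈ S, nhdsWithin x (S \ {x}) = ⊥

/-- Property (FS): self-adjoint elements with finite quasispectrum are dense in the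
set of self-adjoint elements. -/
def HasFS (B : Type*) [NonUnitalRing B] [Module ℂ B] [Star B] [TopologicalSpace B] : Prop :=
  ∀ x : B, IsSelfAdjoint x →
    x ∈ closure {y : B | IsSelfAdjoint y ∧ (quasispectrum ℂ y).Finite}



open Set

lemma binary_expansion (t : ℝ) (ht : t ∈ Set.Icc (0:ℝ) 1) :
    ∃ σ : ℕ → Bool, ∑' n, (2⁻¹:ℝ)^(n+1) * (if σ n then 1 else 0) = t := by
  set r : ℕ → ℝ := fun n =>
    Nat.rec t (fun n rn => rn - if (2⁻¹:ℝ)^(n+1) ≤ rn then (2⁻¹:ℝ)^(n+1) else 0) n with hr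
  have hr0 : r 0 = t := rfl
  have hrs : ∀ n, r (n+1) = r n - if (2⁻¹:ℝ)^(n+1) ≤ r n then (2⁻¹:ℝ)^(n+1) else 0 :=
    fun n => rfl
  have hinv : ∀ n, 0 ≤ r n ∧ r n ≤ (2⁻¹:ℝ)^n := by
    intro n
    induction n with
    | zero => simpa [hr0] using ht
    | succ n ih =>
      rw [hrs n]
      by_cases hc : (2⁻¹:ℝ)^(n+1) ≤ r n
      · rw [if_pos hc]
        constructor
        · linarith
        · have : (2⁻¹:ℝ)^n = 2 * (2⁻¹:ℝ)^(n+1) := by ring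
          linarith [ih.2]
      · rw [if_neg hc]
        constructor
        · linarith [ih.1]
        · linarith [not_le.mp hc]
  set σ : ℕ → Bool := fun n => decide ((2⁻¹:ℝ)^(n+1) ≤ r n) with hσ
  set a : ℕ → ℝ := fun n => (2⁻¹:ℝ)^(n+1) * (if σ n then 1 else 0) with ha
  have hps : ∀ n, ∑ k ∈ Finset.range n, a k = t - r n := by
    intro n
    induction n with
    | zero => simp [hr0]
    | succ n ih =>
      rw [Finset.sum_range_succ, ih, hrs n]
      have : a n = if (2⁻¹:ℝ)^(n+1) ≤ r n then (2⁻¹:ℝ)^(n+1) else 0 := by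
        by_cases hc : (2⁻¹:ℝ)^(n+1) ≤ r n
        · simp [ha, hσ, hc]
        · simp [ha, hσ, hc]
      rw [this]
      ring
  have hgeom : Summable (fun n => (2⁻¹:ℝ)^(n+1)) := by
    have := (summable_geometric_of_lt_one (by norm_num : (0:ℝ) ≤ 2⁻¹)
      (by norm_num : (2⁻¹:ℝ) < 1)).mul_left (2⁻¹:ℝ)
    simpa [pow_succ'] using this
  have hsum : Summable a := by
    apply Summable.of_nonneg_of_le _ _ hgeom
    · intro n; positivity
    · intro n
      rcases hb : (σ n) with _ | _
      · simp [ha, hb]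
      · simp only [ha, hb, if_pos, mul_one, le_refl]
  have h1 : Filter.Tendsto (fun n => ∑ k ∈ Finset.range n, a k) Filter.atTop (nhds (∑' n, a n)) :=
    hsum.hasSum.tendsto_sum_nat
  have h2 : Filter.Tendsto (fun n => ∑ k ∈ Finset.range n, a k) Filter.atTop (nhds t) := by
    simp_rw [hps]
    have hr_to : Filter.Tendsto r Filter.atTop (nhds 0) := by
      have hg : Filter.Tendsto (fun n => (2⁻¹:ℝ)^n) Filter.atTop (nhds 0) :=
        tendsto_pow_atTop_nhds_zero_of_lt_one (by norm_num) (by norm_num)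
      exact squeeze_zero (fun n => (hinv n).1) (fun n => (hinv n).2) hg
    simpa using Filter.Tendsto.const_sub t hr_to
  exact ⟨σ, tendsto_nhds_unique h1 h2⟩


open Set Filter Topology

lemma exists_onto_Icc (Ω : Type*) [TopologicalSpace Ω] [CompactSpace Ω] [T2Space Ω]
    (S : Set Ω) (hSne : S.Nonempty) (hS : ∀ x ∈ S, 𝓝[S \ {x}] x ≠ ⊥) :
    ∃ F : C(Ω, ℝ), ∀ t ∈ Set.Icc (0:ℝ) 1, ∃ x, F x = t := by
  classical
  set K := closure S with hK
  have hKne : K.Nonempty := hSne.mono subset_closure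
  have hKacc : ∀ x ∈ K, (𝓝[K \ {x}] x).NeBot := by
    intro x hx
    by_cases hxS : x ∈ S
    · have h1 : (𝓝[S \ {x}] x).NeBot := neBot_iff.mpr (hS x hxS)
      exact h1.mono (nhdsWithin_mono x (diff_subset_diff_left subset_closure))
    · have h1 : (𝓝[S] x).NeBot := mem_closure_iff_nhdsWithin_neBot.mp hx
      have hsub : S ⊆ K \ {x} := fun y hy =>
        ⟨subset_closure hy, by simp only [mem_singleton_iff]; rintro rfl; exact hxS hy⟩
      exact h1.mono (nhdsWithin_mono x hsub)
  -- splitting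
  have split : ∀ U : Set Ω, ∃ V : Bool → Set Ω, IsOpen U → (U ∩ K).Nonempty →
      ((∀ b, IsOpen (V b) ∧ ((V b) ∩ K).Nonempty ∧ closure (V b) ⊆ U) ∧
        Disjoint (closure (V false)) (closure (V true))) := by
    intro U
    by_cases hU : IsOpen U ∧ (U ∩ K).Nonempty
    case neg => exact ⟨fun _ => ∅, fun h1 h2 => absurd ⟨h1, h2⟩ hU⟩
    obtain ⟨hUo, x, hxU, hxK⟩ := hU
    have hacc := hKacc x hxK
    have hmem : U ∩ (K \ {x}) ∈ 𝓝[K \ {x}] x :=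
      inter_mem (mem_nhdsWithin_of_mem_nhds (hUo.mem_nhds hxU)) self_mem_nhdsWithin
    obtain ⟨y, hyU, hyK, hyx⟩ := Filter.nonempty_of_mem hmem
    have hxy : x ≠ y := fun h => hyx (by simp [h.symm])
    obtain ⟨Vx, Vy, hVxo, hVyo, hxVx, hyVy, hVd⟩ := t2_separation hxy
    obtain ⟨Wx, hWx, hWxc, hWxs⟩ :=
      exists_mem_nhds_isClosed_subset ((hVxo.inter hUo).mem_nhds ⟨hxVx, hxU⟩)
    obtain ⟨Wy, hWy, hWyc, hWys⟩ :=
      exists_mem_nhds_isClosed_subset ((hVyo.inter hUo).mem_nhds ⟨hyVy, hyU⟩)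
    refine ⟨fun b => if b then interior Wy else interior Wx, fun _ _ => ⟨?_, ?_⟩⟩
    · intro b
      have key : ∀ (W : Set Ω) (V' : Set Ω), IsClosed W → W ⊆ V' ∩ U → (z : Ω) → z ∈ K →
          W ∈ 𝓝 z → IsOpen (interior W) ∧ (interior W ∩ K).Nonempty ∧ closure (interior W) ⊆ U := by
        intro W V' hWc hWs z hzK hWz
        refine ⟨isOpen_interior, ⟨z, mem_interior_iff_mem_nhds.mpr hWz, hzK⟩, ?_⟩
        calc closure (interior W) ⊆ closure W := closure_mono interior_subset
          _ = W := hWc.closure_eq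
          _ ⊆ U := hWs.trans inter_subset_right
      cases b
      · exact key Wx Vx hWxc hWxs x hxK hWx
      · exact key Wy Vy hWyc hWys y hyK hWy
    · have h1 : closure (interior Wx) ⊆ Vx := by
        calc closure (interior Wx) ⊆ closure Wx := closure_mono interior_subset
          _ = Wx := hWxc.closure_eq
          _ ⊆ Vx := hWxs.trans inter_subset_left
      have h2 : closure (interior Wy) ⊆ Vy := by
        calc closure (interior Wy) ⊆ closure Wy := closure_mono interior_subset
          _ = Wy := hWyc.closure_eq
          _ ⊆ Vy := hWys.trans inter_subset_left
      simpa using hVd.mono h1 h2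
  choose ch hch using split
  -- the tree
  set T : List Bool → Set Ω := fun s => s.foldr (fun b W => ch W b) Set.univ with hT
  have hTnil : T [] = Set.univ := rfl
  have hTcons : ∀ b s, T (b :: s) = ch (T s) b := fun _ _ => rfl
  have hTprop : ∀ s : List Bool, IsOpen (T s) ∧ (T s ∩ K).Nonempty := by
    intro s
    induction s with
    | nil => exact ⟨isOpen_univ, by simpa [hTnil] using hKne⟩
    | cons b s ih =>
      have := (hch (T s) ih.1 ih.2).1 b
      exact ⟨this.1, this.2.1⟩
  have hsub : ∀ (s : List Bool) b, closure (T (b :: s)) ⊆ T s := by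
    intro s b
    exact (((hch (T s) (hTprop s).1 (hTprop s).2).1 b).2.2)
  have hdisj2 : ∀ s : List Bool, Disjoint (closure (T (false :: s))) (closure (T (true :: s))) :=
    fun s => (hch (T s) (hTprop s).1 (hTprop s).2).2
  have hdisjlen : ∀ s t : List Bool, s.length = t.length → s ≠ t →
      Disjoint (closure (T s)) (closure (T t)) := by
    intro s
    induction s with
    | nil =>
      intro t hl hne
      cases t with
      | nil => exact absurd rfl hne
      | cons c t' => simp at hl
    | cons b s ih =>
      intro t hl hne
      cases t with
      | nil => simp at hl
      | cons c t' =>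
        simp only [List.length_cons, Nat.succ.injEq] at hl
        by_cases hst : s = t'
        · subst hst
          have hbc : b ≠ c := by rintro rfl; exact hne rfl
          cases b <;> cases c
          · exact absurd rfl hbc
          · exact hdisj2 s
          · exact (hdisj2 s).symm
          · exact absurd rfl hbc
        · exact (ih t' hl hst).mono ((hsub s b).trans subset_closure)
            ((hsub t' c).trans subset_closure)
  -- branch nodes
  set Nlist : (ℕ → Bool) → ℕ → List Bool :=
    fun σ n => Nat.rec [] (fun k ih => σ k :: ih) n with hNlist
  have hN0 : ∀ σ, Nlist σ 0 = [] := fun _ => rfl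
  have hNs : ∀ σ n, Nlist σ (n+1) = σ n :: Nlist σ n := fun _ _ => rfl
  have hNlen : ∀ σ n, (Nlist σ n).length = n := by
    intro σ n; induction n with
    | zero => rfl
    | succ n ih => simp [hNs, ih]
  have hNcongr : ∀ (n : ℕ) (σ σ' : ℕ → Bool), (∀ k < n, σ k = σ' k) → Nlist σ n = Nlist σ' n := by
    intro n
    induction n with
    | zero => intro _ _ _; rfl
    | succ n ih =>
      intro σ σ' hss
      rw [hNs, hNs, hss n (Nat.lt_succ_self n),
        ih σ σ' (fun k hk => hss k (hk.trans (Nat.lt_succ_self n)))]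
  -- level unions
  set lst : ∀ n : ℕ, (Fin n → Bool) → List Bool :=
    fun n v => Nlist (fun k => if h : k < n then v ⟨k, h⟩ else false) n with hlst
  have hlst_eq : ∀ (σ : ℕ → Bool) (n : ℕ), lst n (fun i => σ i) = Nlist σ n := by
    intro σ n
    exact hNcongr n _ σ (fun k hk => by simp [hk])
  have hlst_len : ∀ n v, (lst n v).length = n := fun n v => hNlen _ n
  set D : Bool → ℕ → Set Ω := fun b n => ⋃ v : Fin n → Bool, closure (T (b :: lst n v)) with hD
  have hDclosed : ∀ b n, IsClosed (D b n) :=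
    fun b n => isClosed_iUnion_of_finite (fun v => isClosed_closure)
  have hDdisj : ∀ n, Disjoint (D false n) (D true n) := by
    intro n
    rw [Set.disjoint_iUnion_left]
    intro v
    rw [Set.disjoint_iUnion_right]
    intro w
    by_cases hvw : lst n v = lst n w
    · rw [hvw]; exact hdisj2 _
    · refine hdisjlen _ _ (by simp [hlst_len]) (by simp [hvw])
  -- Urysohn functions
  have hg : ∀ n : ℕ, ∃ g : C(Ω, ℝ), Set.EqOn g 0 (D false n) ∧ Set.EqOn g 1 (D true n) ∧
      ∀ x, g x ∈ Set.Icc (0:ℝ) 1 :=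
    fun n => exists_continuous_zero_one_of_isClosed (hDclosed false n) (hDclosed true n) (hDdisj n)
  choose g hg0 hg1 hg01 using hg
  -- the function
  have hgeom : Summable (fun n => (2⁻¹:ℝ)^(n+1)) := by
    have := (summable_geometric_of_lt_one (by norm_num : (0:ℝ) ≤ 2⁻¹)
      (by norm_num : (2⁻¹:ℝ) < 1)).mul_left (2⁻¹:ℝ)
    simpa [pow_succ'] using this
  have hfc : Continuous (fun x => ∑' n, (2⁻¹:ℝ)^(n+1) * g n x) := by
    apply continuous_tsum (fun n => (continuous_const.mul (g n).continuous)) hgeom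
    intro n x
    have h1 := (hg01 n x).1
    have h2 := (hg01 n x).2
    show ‖(2⁻¹:ℝ)^(n+1) * g n x‖ ≤ (2⁻¹:ℝ)^(n+1)
    rw [Real.norm_eq_abs, abs_mul, abs_of_nonneg (by positivity : (0:ℝ) ≤ (2⁻¹:ℝ)^(n+1)),
      abs_of_nonneg h1]
    nlinarith [pow_pos (by norm_num : (0:ℝ) < 2⁻¹) (n+1)]
  refine ⟨⟨_, hfc⟩, ?_⟩
  intro t ht
  obtain ⟨σ, hσ⟩ := binary_expansion t ht
  -- branch compacts
  set C : ℕ → Set Ω := fun n => closure (T (Nlist σ (n+1))) with hC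
  have hCsub : ∀ n, C (n+1) ⊆ C n := by
    intro n
    calc closure (T (Nlist σ (n+2))) = closure (T (σ (n+1) :: Nlist σ (n+1))) := by rw [hNs]
      _ ⊆ T (Nlist σ (n+1)) := hsub _ _
      _ ⊆ closure (T (Nlist σ (n+1))) := subset_closure
  have hCne : ∀ n, (C n).Nonempty :=
    fun n => ((hTprop (Nlist σ (n+1))).2.mono inter_subset_left).mono subset_closure
  obtain ⟨x, hx⟩ := IsCompact.nonempty_iInter_of_sequence_nonempty_isCompact_isClosed C
    hCsub hCne (isClosed_closure.isCompact) (fun n => isClosed_closure)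
  refine ⟨x, ?_⟩
  have hgx : ∀ n, g n x = if σ n then 1 else 0 := by
    intro n
    have hxn : x ∈ closure (T (σ n :: Nlist σ n)) := by
      have := Set.mem_iInter.mp hx n
      simpa only [hC, hNs] using this
    have hxD : x ∈ D (σ n) n := by
      rw [hD]
      refine Set.mem_iUnion.mpr ⟨fun i => σ i, ?_⟩
      rwa [hlst_eq σ n]
    cases hσn : σ n
    · rw [hσn] at hxD
      simpa using hg0 n hxD
    · rw [hσn] at hxD
      simpa using hg1 n hxD
  calc (∑' n, (2⁻¹:ℝ)^(n+1) * g n x) = ∑' n, (2⁻¹:ℝ)^(n+1) * (if σ n then 1 else 0) :=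
        tsum_congr (fun n => by rw [hgx n])
    _ = t := hσ


open Set Filter Topology

theorem stmt_0 (Ω : Type*) [TopologicalSpace Ω] [CompactSpace Ω] [T2Space Ω]
    (h : ∀ B : NonUnitalStarSubalgebra ℂ C(Ω, ℂ), IsClosed (B : Set C(Ω, ℂ)) → HasFS B) :
    IsScatteredSpace Ω := by
  classical
  by_contra hns
  rw [IsScatteredSpace] at hns
  push_neg at hns
  obtain ⟨S, hSne, hS⟩ := hns
  obtain ⟨F, hFsurj⟩ := exists_onto_Icc Ω S hSne (fun x hx => (hS x hx).ne)
  set f : Ω → ℝ := ⇑F with hf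
  -- the complexification of f
  set fC : C(Ω, ℂ) := ⟨fun x => (f x : ℂ), Complex.continuous_ofReal.comp F.continuous⟩ with hfC
  -- the subalgebra of functions constant on fibers of f
  set Bcar : Set C(Ω, ℂ) := {p | ∀ x y, f x = f y → p x = p y} with hBcar
  have hBclosed : IsClosed Bcar := by
    have : Bcar = ⋂ (x : Ω), ⋂ (y : Ω), {p : C(Ω, ℂ) | f x = f y → p x = p y} := by
      ext p; simp [hBcar, Set.mem_iInter]
    rw [this]
    refine isClosed_iInter fun x => isClosed_iInter fun y => ?_
    by_cases hxy : f x = f y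
    · simpa [hxy] using isClosed_eq (continuous_eval_const x) (continuous_eval_const y)
    · simp [hxy]
  set Balg : NonUnitalStarSubalgebra ℂ C(Ω, ℂ) :=
    { carrier := Bcar
      add_mem' := fun {p} {q} hp hq x y hxy => by
        simp only [ContinuousMap.add_apply, hp x y hxy, hq x y hxy]
      zero_mem' := fun x y _ => rfl
      mul_mem' := fun {p} {q} hp hq x y hxy => by
        simp only [ContinuousMap.mul_apply, hp x y hxy, hq x y hxy]
      smul_mem' := fun c {p} hp x y hxy => by
        simp only [ContinuousMap.smul_apply, hp x y hxy]
      star_mem' := fun {p} hp x y hxy => by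
        simp only [ContinuousMap.star_apply, hp x y hxy] } with hBalg
  have hfCmem : fC ∈ Balg := by
    intro x y hxy
    simp [hfC, hxy]
  set xel : Balg := ⟨fC, hfCmem⟩ with hxel
  have hsa : IsSelfAdjoint xel := by
    rw [IsSelfAdjoint]
    apply Subtype.ext
    show star fC = fC
    ext x
    simp [hfC, ContinuousMap.star_apply]
  have hcl := h Balg hBclosed xel hsa
  have h2 : fC ∈ closure ((↑) ''
      {y : Balg | IsSelfAdjoint y ∧ (quasispectrum ℂ y).Finite}) :=
    map_mem_closure continuous_subtype_val hcl (fun y hy => Set.mem_image_of_mem _ hy)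
  obtain ⟨y', hy'mem, hdist⟩ := Metric.mem_closure_iff.mp h2 (1/2) (by norm_num)
  obtain ⟨yB, hyB, rfl⟩ := hy'mem
  -- range of y' is finite
  have hq1 : quasispectrum ℂ ((yB : C(Ω, ℂ))) ⊆ quasispectrum ℂ yB := by
    have := NonUnitalAlgHom.quasispectrum_apply_subset
      (NonUnitalStarSubalgebraClass.subtype (R := ℂ) Balg) yB
    simpa using this
  have hrange : (Set.range ⇑(yB : C(Ω, ℂ))).Finite := by
    refine hyB.2.subset ?_
    intro c hc
    apply hq1
    apply spectrum_subset_quasispectrum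
    rw [ContinuousMap.spectrum_eq_range]
    exact hc
  set y' : C(Ω, ℂ) := (yB : C(Ω, ℂ)) with hy'
  have hfib : ∀ x y, f x = f y → y' x = y' y := yB.2
  -- final connectedness argument
  obtain ⟨x0, hx0⟩ := hFsurj 0 (by norm_num)
  set c0 : ℂ := y' x0 with hc0
  set A1 : Set ℝ := f '' (⇑y' ⁻¹' {c0}) with hA1
  set A2 : Set ℝ := f '' (⇑y' ⁻¹' ((Set.range ⇑y') \ {c0})) with hA2
  have hA1c : IsClosed A1 :=
    (((isClosed_singleton.preimage y'.continuous).isCompact).image F.continuous).isClosed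
  have hA2c : IsClosed A2 :=
    ((((hrange.diff : (Set.range ⇑y' \ {c0}).Finite).isClosed.preimage y'.continuous).isCompact).image F.continuous).isClosed
  have hcov : Set.Icc (0:ℝ) 1 ⊆ A1 ∪ A2 := by
    intro t ht
    obtain ⟨x, hx⟩ := hFsurj t ht
    by_cases hyx : y' x = c0
    · exact Or.inl ⟨x, hyx, hx⟩
    · exact Or.inr ⟨x, ⟨⟨x, rfl⟩, hyx⟩, hx⟩
  have hdisj : Set.Icc (0:ℝ) 1 ∩ (A1 ∩ A2) = ∅ := by
    rw [Set.eq_empty_iff_forall_notMem]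
    rintro t ⟨-, ⟨x1, hx1, hfx1⟩, ⟨x2, hx2, hfx2⟩⟩
    have := hfib x1 x2 (by rw [hfx1, hfx2])
    rw [hx1] at this
    exact hx2.2 this.symm
  have hsub := isPreconnected_iff_subset_of_disjoint_closed.mp isPreconnected_Icc
    A1 A2 hA1c hA2c hcov hdisj
  have h1A1 : (1:ℝ) ∈ A1 := by
    rcases hsub with hsub | hsub
    · exact hsub (by norm_num)
    · exfalso
      have h0 : (0:ℝ) ∈ A2 := hsub (by norm_num)
      obtain ⟨x2, hx2, hfx2⟩ := h0
      have := hfib x2 x0 (by rw [hfx2, hx0])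
      exact hx2.2 this
  obtain ⟨x1, hx1, hfx1⟩ := h1A1
  -- distance contradiction
  have hb0 : dist (fC x0) (y' x0) < 1/2 :=
    lt_of_le_of_lt (ContinuousMap.dist_apply_le_dist x0) hdist
  have hb1 : dist (fC x1) (y' x1) < 1/2 :=
    lt_of_le_of_lt (ContinuousMap.dist_apply_le_dist x1) hdist
  have hfC0 : fC x0 = (0:ℂ) := by simp [hfC, hx0]
  have hfC1 : fC x1 = (1:ℂ) := by simp [hfC, hfx1]
  rw [hfC0] at hb0
  rw [hfC1, hx1] at hb1
  rw [← hc0] at hb0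
  have htri : dist (0:ℂ) (1:ℂ) ≤ dist (0:ℂ) c0 + dist c0 (1:ℂ) := dist_triangle _ _ _
  have : dist (0:ℂ) (1:ℂ) = 1 := by simp
  rw [this] at htri
  rw [dist_comm] at hb1
  linarith
end

section
/- Let Ω be a compact Hausdorff topological space. If Ω is a scattered topological space, then the C*-algebra C(Ω, ℂ) has property (FS), i.e., the set of self-adjoint elements with finite spectrum is dense in the set of all self-adjoint elements of C(Ω, ℂ). -/
open Set

lemma scattered_totallyDisconnected {X : Type*} [TopologicalSpace X] [T1Space X]
    (h : IsScatteredSpace X) : TotallyDisconnectedSpace X := by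
  constructor
  intro t _ ht
  by_contra hcon
  rw [Set.not_subsingleton_iff] at hcon
  obtain ⟨x, hx, hiso⟩ := h t hcon.nonempty
  have hempty : (∅ : Set X) ∈ nhdsWithin x (t \ {x}) := by
    rw [hiso]; exact Filter.mem_bot
  rw [mem_nhdsWithin] at hempty
  obtain ⟨U, hUopen, hxU, hUsub⟩ := hempty
  obtain ⟨y, hy, hyx⟩ := hcon.exists_ne x
  have hsub : t ⊆ U ∪ {x}ᶜ := by
    intro z hz
    by_cases hzx : z = x
    · exact Or.inl (hzx ▸ hxU)
    · exact Or.inr hzx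
  obtain ⟨z, hzt, hzU, hzx⟩ := ht U {x}ᶜ hUopen isOpen_compl_singleton hsub
    ⟨x, hx, hxU⟩ ⟨y, hy, hyx⟩
  exact hUsub ⟨hzU, hzt, hzx⟩

lemma disjointify {Ω : Type*} [TopologicalSpace Ω] (t : Finset Ω) (V : Ω → Set Ω)
    (hV : ∀ i ∈ t, IsClopen (V i)) :
    ∃ W : Ω → Set Ω, (∀ i ∈ t, IsClopen (W i)) ∧ (∀ i ∈ t, W i ⊆ V i) ∧
      (∀ i ∈ t, ∀ j ∈ t, i ≠ j → W i ∩ W j = ∅) ∧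
      (⋃ i ∈ t, W i) = ⋃ i ∈ t, V i := by
  classical
  induction t using Finset.induction_on with
  | empty => exact ⟨V, by simp, by simp, by simp, rfl⟩
  | @insert a t ha ih =>
    obtain ⟨W, hWc, hWs, hWd, hWu⟩ := ih (fun i hi => hV i (Finset.mem_insert_of_mem hi))
    refine ⟨fun i => if i = a then V a \ ⋃ j ∈ t, V j else W i, ?_, ?_, ?_, ?_⟩
    · intro i hi
      by_cases hia : i = a
      · simp only [hia, if_pos rfl]
        exact (hV a (Finset.mem_insert_self a _)).diff
          (isClopen_biUnion_finset (fun j hj => hV j (Finset.mem_insert_of_mem hj)))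
      · simp only [if_neg hia]
        exact hWc i ((Finset.mem_insert.1 hi).resolve_left hia)
    · intro i hi
      by_cases hia : i = a
      · simp only [hia, if_pos rfl]; exact Set.diff_subset
      · simp only [if_neg hia]
        exact hWs i ((Finset.mem_insert.1 hi).resolve_left hia)
    · intro i hi j hj hij
      by_cases hia : i = a
      · subst hia
        have hja : j ≠ i := fun hh => hij hh.symm
        simp only [if_pos rfl, if_neg hja]
        have hj' : j ∈ t := (Finset.mem_insert.1 hj).resolve_left hja
        apply Set.eq_empty_of_subset_empty
        rintro z ⟨⟨_, hz2⟩, hzW⟩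
        exact hz2 (Set.mem_biUnion hj' (hWs j hj' hzW))
      · by_cases hja : j = a
        · subst hja
          simp only [if_pos rfl, if_neg hia]
          have hi' : i ∈ t := (Finset.mem_insert.1 hi).resolve_left hia
          apply Set.eq_empty_of_subset_empty
          rintro z ⟨hzW, _, hz2⟩
          exact hz2 (Set.mem_biUnion hi' (hWs i hi' hzW))
        · simp only [if_neg hia, if_neg hja]
          exact hWd i ((Finset.mem_insert.1 hi).resolve_left hia)
            j ((Finset.mem_insert.1 hj).resolve_left hja) hij
    · have hne : ∀ j ∈ t, j ≠ a := fun j hj hh => ha (hh ▸ hj)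
      rw [Finset.set_biUnion_insert, Finset.set_biUnion_insert, if_pos rfl]
      have : (⋃ i ∈ t, if i = a then V a \ ⋃ j ∈ t, V j else W i) = ⋃ i ∈ t, W i := by
        apply Set.iUnion₂_congr
        intro i hi
        rw [if_neg (hne i hi)]
      rw [this, hWu, Set.diff_union_self]

theorem stmt_1 (Ω : Type*) [TopologicalSpace Ω] [CompactSpace Ω] [T2Space Ω]
    (h : IsScatteredSpace Ω) :
    ∀ f : C(Ω, ℂ), IsSelfAdjoint f →
      f ∈ closure {g : C(Ω, ℂ) | IsSelfAdjoint g ∧ (spectrum ℂ g).Finite} := by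
  classical
  have _inst : TotallyDisconnectedSpace Ω := scattered_totallyDisconnected h
  intro f hf
  have hfreal : ∀ x, (starRingEnd ℂ) (f x) = f x := by
    intro x
    have := congrArg (fun g : C(Ω, ℂ) => g x) hf
    simpa using this
  rw [Metric.mem_closure_iff]
  intro ε hε
  -- clopen cover refining balls of radius ε/2
  have hcov : ∀ x : Ω, ∃ V : Set Ω, IsClopen V ∧ x ∈ V ∧
      V ⊆ f ⁻¹' Metric.ball (f x) (ε / 2) := fun x =>
    compact_exists_isClopen_in_isOpen
      (Metric.isOpen_ball.preimage f.continuous)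
      (by simp [Metric.mem_ball, hε])
  choose V hVc hVx hVsub using hcov
  obtain ⟨t, ht⟩ := isCompact_univ.elim_finite_subcover V (fun x => (hVc x).2)
    (fun x _ => Set.mem_iUnion.2 ⟨x, hVx x⟩)
  obtain ⟨W, hWc, hWV, hWd, hWu⟩ := disjointify t V (fun i _ => hVc i)
  have hWcov : ∀ y : Ω, ∃ i ∈ t, y ∈ W i := by
    intro y
    have hy : y ∈ ⋃ i ∈ t, V i := ht (Set.mem_univ y)
    rw [← hWu] at hy
    simpa using hy
  -- make the pieces clopen everywhere
  let W' : Ω → Set Ω := fun i => if i ∈ t then W i else ∅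
  have hW'c : ∀ i, IsClopen (W' i) := by
    intro i
    by_cases hi : i ∈ t
    · simpa [W', hi] using hWc i hi
    · simpa [W', hi] using isClopen_empty
  have hW'eq : ∀ i ∈ t, W' i = W i := fun i hi => by simp [W', hi]
  -- the approximating function
  let ind : Ω → C(Ω, ℂ) := fun i =>
    ⟨(W' i).indicator (fun _ => (1 : ℂ)),
      continuous_indicator (by simp [hW'c i]) continuous_const.continuousOn⟩
  let g : C(Ω, ℂ) := ∑ i ∈ t, (f i) • ind i
  have hg_apply : ∀ y : Ω, ∀ i₀ ∈ t, y ∈ W i₀ → g y = f i₀ := by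
    intro y i₀ hi₀ hyW
    have : g y = ∑ i ∈ t, f i * (W' i).indicator (fun _ => (1 : ℂ)) y := by
      simp [g, ind, ContinuousMap.sum_apply]
    rw [this]
    rw [Finset.sum_eq_single_of_mem i₀ hi₀]
    · rw [hW'eq i₀ hi₀, Set.indicator_of_mem hyW, mul_one]
    · intro j hj hji
      have hyj : y ∉ W j := by
        intro hyWj
        have hmem : y ∈ W j ∩ W i₀ := ⟨hyWj, hyW⟩
        rw [hWd j hj i₀ hi₀ hji] at hmem
        exact Set.notMem_empty y hmem
      rw [hW'eq j hj, Set.indicator_of_notMem hyj, mul_zero]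
  refine ⟨g, ⟨?_, ?_⟩, ?_⟩
  · -- self-adjoint
    ext y
    obtain ⟨i₀, hi₀, hyW⟩ := hWcov y
    have hgy := hg_apply y i₀ hi₀ hyW
    show star (g y) = g y
    rw [hgy]
    exact hfreal i₀
  · -- finite spectrum
    rw [ContinuousMap.spectrum_eq_range]
    apply Set.Finite.subset (t.finite_toSet.image f)
    rintro z ⟨y, rfl⟩
    obtain ⟨i₀, hi₀, hyW⟩ := hWcov y
    exact ⟨i₀, hi₀, (hg_apply y i₀ hi₀ hyW).symm⟩
  · -- distance
    rw [ContinuousMap.dist_lt_iff hε]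
    intro y
    obtain ⟨i₀, hi₀, hyW⟩ := hWcov y
    rw [hg_apply y i₀ hi₀ hyW]
    have hy : y ∈ f ⁻¹' Metric.ball (f i₀) (ε / 2) := hVsub i₀ (hWV i₀ hi₀ hyW)
    have : dist (f y) (f i₀) < ε / 2 := hy
    calc dist (f y) (f i₀) < ε / 2 := this
      _ < ε := by linarith
end

section
/- Let A be a (not necessarily unital) C*-algebra. Then A is scattered if and only if every separable commutative C*-subalgebra of A (i.e., every separable commutative closed star-subalgebra of A) has property (FS) (equivalently, has real rank zero). -/
/-- A (not necessarily unital) C*-algebra is scattered if every self-adjoint element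
has countable quasispectrum (Huruya's characterization). -/
def IsScatteredCStarAlgebra (B : Type*) [NonUnitalRing B] [Module ℂ B] [Star B] : Prop :=
  ∀ x : B, IsSelfAdjoint x → (quasispectrum ℂ x).Countable

open Unitization ContinuousMapZero Set Metric Filter Topology


lemma aux_binary (r : ℝ) (hr : r ∈ Set.Icc (0 : ℝ) 1) :
    ∃ a : ℕ → Bool, (∑' n, (if a n then ((1:ℝ)/2) ^ (n+1) else 0)) = r := by
  obtain ⟨hr0, hr1⟩ := hr
  classical
  let s : ℕ → ℝ := fun n =>
    Nat.rec 0 (fun n sn => sn + (if sn + ((1:ℝ)/2) ^ (n+1) ≤ r then ((1:ℝ)/2) ^ (n+1) else 0)) n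
  have hs0 : s 0 = 0 := rfl
  have hstep : ∀ n, s (n+1) = s n + (if s n + ((1:ℝ)/2) ^ (n+1) ≤ r then ((1:ℝ)/2) ^ (n+1) else 0) :=
    fun n => rfl
  let a : ℕ → Bool := fun n => decide (s n + ((1:ℝ)/2) ^ (n+1) ≤ r)
  have hinv : ∀ n, s n ≤ r ∧ r ≤ s n + ((1:ℝ)/2) ^ n := by
    intro n
    induction n with
    | zero => simpa [hs0] using ⟨hr0, hr1⟩
    | succ n ih =>
      rw [hstep n]
      by_cases h : s n + ((1:ℝ)/2) ^ (n+1) ≤ r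
      · rw [if_pos h]
        refine ⟨h, ?_⟩
        have : ((1:ℝ)/2) ^ n = ((1:ℝ)/2) ^ (n+1) + ((1:ℝ)/2) ^ (n+1) := by ring
        linarith [ih.2]
      · rw [if_neg h]
        push_neg at h
        exact ⟨by linarith [ih.1], by linarith⟩
  have hsum : ∀ n, s n = ∑ k ∈ Finset.range n, (if a k then ((1:ℝ)/2) ^ (k+1) else 0) := by
    intro n
    induction n with
    | zero => simp [hs0]
    | succ n ih =>
      rw [Finset.sum_range_succ, ← ih, hstep n]
      congr 1
      simp [a]
  have htend : Tendsto s atTop (𝓝 r) := by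
    have h1 : Tendsto (fun n : ℕ => r - ((1:ℝ)/2) ^ n) atTop (𝓝 (r - 0)) :=
      tendsto_const_nhds.sub (tendsto_pow_atTop_nhds_zero_of_lt_one (by norm_num) (by norm_num))
    have h2 : Tendsto (fun _ : ℕ => r) atTop (𝓝 r) := tendsto_const_nhds
    rw [sub_zero] at h1
    refine tendsto_of_tendsto_of_tendsto_of_le_of_le h1 h2 (fun n => by linarith [(hinv n).2]) ?_
    exact fun n => (hinv n).1
  have hsummable : Summable (fun n => (if a n then ((1:ℝ)/2) ^ (n+1) else 0)) := by
    refine Summable.of_nonneg_of_le (fun n => by positivity) (fun n => ?_)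
      (summable_geometric_two.mul_left ((1:ℝ)/2))
    have h : ((1:ℝ)/2) ^ (n+1) = (1/2) * (1/2) ^ n := by ring
    split
    · exact le_of_eq h
    · positivity
  refine ⟨a, ?_⟩
  have := (hsummable.hasSum_iff_tendsto_nat).mpr (by simpa only [← hsum] using htend)
  exact this.tsum_eq

lemma aux_interval {K : Set ℝ} (hK : IsClosed K) (h : ¬ K.Countable) :
    ∃ f : ℝ → ℝ, Continuous f ∧ f 0 = 0 ∧ ∃ a : ℝ, Set.Icc a (a + 1) ⊆ f '' K := by
  obtain ⟨g, hgK, hgc, hginj⟩ := hK.exists_nat_bool_injection_of_not_countable h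
  classical
  set c : (ℕ → Bool) → ℝ := fun a => ∑' n, (if a n then ((1:ℝ)/2) ^ (n+1) else 0) with hc
  have hcc : Continuous c := by
    refine continuous_tsum (f := fun n (a : ℕ → Bool) => if a n then ((1:ℝ)/2) ^ (n+1) else 0)
      (fun n => ?_) (summable_geometric_two.mul_left ((1:ℝ)/2)) (fun n a => ?_)
    · exact Continuous.comp (continuous_of_discreteTopology (f := fun b : Bool =>
        if b then ((1:ℝ)/2) ^ (n+1) else 0)) (continuous_apply n)
    · have h : ((1:ℝ)/2) ^ (n+1) = (1/2) * (1/2) ^ n := by ring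
      rw [Real.norm_eq_abs]
      split
      · rw [abs_of_nonneg (by positivity)]; exact le_of_eq h
      · rw [abs_zero]; positivity
  have hemb : IsClosedEmbedding g := hgc.isClosedEmbedding hginj
  set C : Set ℝ := Set.range g with hCdef
  have hCclosed : IsClosed C := hemb.isClosed_range
  let e : (ℕ → Bool) ≃ₜ C := hemb.toIsEmbedding.toHomeomorph
  let F : C(C, ℝ) := ⟨c ∘ e.symm, hcc.comp e.symm.continuous⟩
  obtain ⟨q, hq⟩ := F.exists_restrict_eq hCclosed
  refine ⟨fun t => q t - q 0, (map_continuous q).sub continuous_const, by simp, -q 0, ?_⟩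
  rintro r' ⟨hr1', hr2'⟩
  obtain ⟨a, ha⟩ := aux_binary (r' + q 0) ⟨by linarith, by linarith⟩
  refine ⟨g a, hgK ⟨a, rfl⟩, ?_⟩
  have hmem : g a ∈ C := ⟨a, rfl⟩
  have h1 : q (g a) = F ⟨g a, hmem⟩ := by
    have := congrFun (congrArg (fun (u : C(C,ℝ)) => (u : C → ℝ)) hq) ⟨g a, hmem⟩
    simpa using this
  have h2 : F ⟨g a, hmem⟩ = c a := by
    show c (e.symm ⟨g a, hmem⟩) = c a
    congr 1
    have : e a = ⟨g a, hmem⟩ := Subtype.ext rfl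
    rw [← this, Homeomorph.symm_apply_apply]
  show q (g a) - q 0 = r'
  rw [h1, h2, hc]
  simp only []
  rw [ha]
  ring

section Aux

variable {A : Type*} [NonUnitalCStarAlgebra A] [StarModule ℂ A]

set_option maxHeartbeats 1000000 in
/-- Spectral permanence for quasispectra in closed non-unital star subalgebras. -/
lemma aux_quasispectrum_eq (B : NonUnitalStarSubalgebra ℂ A) (hB : IsClosed (B : Set A))
    (x : B) : quasispectrum ℂ x = quasispectrum ℂ (x : A) := by
  haveI : IsClosed (B : Set A) := hB
  set φ : B →⋆ₙₐ[ℂ] A := NonUnitalStarSubalgebraClass.subtype B with hφ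
  have hφinj : Function.Injective φ := Subtype.val_injective
  set ψ : Unitization ℂ B →⋆ₐ[ℂ] Unitization ℂ A := starMap φ with hψ
  have hψinj : Function.Injective ψ := starMap_injective hφinj
  have key : ∀ v : Unitization ℂ B, ψ v = inl v.fst + inr (φ v.snd) := by
    intro v
    conv_lhs => rw [← Unitization.inl_fst_add_inr_snd_eq v]
    simp only [map_add, hψ, starMap_inl, starMap_inr, Unitization.algebraMap_eq_inl]
  have hrange : (ψ.range : Set (Unitization ℂ A)) = (fun u : Unitization ℂ A => u.snd) ⁻¹' (B : Set A) := by
    ext u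
    constructor
    · rintro ⟨v, rfl⟩
      show (ψ v).snd ∈ (B : Set A)
      simp only [key, Set.mem_preimage, Unitization.snd_add,
        Unitization.snd_inl, Unitization.snd_inr, zero_add]
      exact (v.snd).2
    · intro hu
      refine ⟨Unitization.inl u.fst + inr (⟨u.snd, hu⟩ : B), ?_⟩
      show ψ _ = u
      rw [key]
      simp only [Unitization.fst_add, Unitization.fst_inl, Unitization.fst_inr, add_zero,
        Unitization.snd_add, Unitization.snd_inl, Unitization.snd_inr, zero_add]
      have : φ (⟨u.snd, hu⟩ : B) = u.snd := rfl
      rw [this, Unitization.inl_fst_add_inr_snd_eq u]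
  have hsnd : Continuous (fun u : Unitization ℂ A => u.snd) :=
    continuous_snd.comp (Unitization.uniformEquivProd (𝕜 := ℂ) (A := A)).continuous
  haveI hclosed : IsClosed (ψ.range : Set (Unitization ℂ A)) := by
    rw [hrange]; exact hB.preimage hsnd
  let e : Unitization ℂ B ≃⋆ₐ[ℂ] ψ.range := StarAlgEquiv.ofInjective ψ hψinj
  have step2 : spectrum ℂ (inr x : Unitization ℂ B) = spectrum ℂ (e (inr x)) :=
    (AlgEquiv.spectrum_eq e _).symm
  calc quasispectrum ℂ x = spectrum ℂ (inr x : Unitization ℂ B) :=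
        Unitization.quasispectrum_eq_spectrum_inr' ℂ ℂ x
    _ = spectrum ℂ (e (inr x)) := step2
    _ = spectrum ℂ ((e (inr x) : Unitization ℂ A)) := StarSubalgebra.spectrum_eq ψ.range
    _ = spectrum ℂ (inr (x : A) : Unitization ℂ A) := by
        have h1 : ((e (inr x) : Unitization ℂ A)) = ψ (inr x) := rfl
        rw [h1, hψ, starMap_inr]; rfl
    _ = quasispectrum ℂ (x : A) := (Unitization.quasispectrum_eq_spectrum_inr' ℂ ℂ _).symm

lemma aux_approx (x : A) (hx : IsSelfAdjoint x) (hct : (quasispectrum ℝ x).Countable)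
    {ε : ℝ} (hε : 0 < ε) :
    ∃ y : A, IsSelfAdjoint y ∧ (quasispectrum ℝ y).Finite ∧ ‖y - x‖ < ε := by
  classical
  set K : Set ℝ := quasispectrum ℝ x with hKdef
  have hKcpt : IsCompact K := isCompact_iff_compactSpace.mpr inferInstance
  obtain ⟨M, hM⟩ := hKcpt.isBounded.subset_closedBall 0
  -- choose a good δ
  have hbad : ¬ (Set.Ioo (0:ℝ) ε ⊆ (fun p : ℝ × ℤ => p.1 / ((p.2 : ℝ) + 1/2)) '' (K ×ˢ Set.univ)) := by
    intro hsub
    have hcnt : ((fun p : ℝ × ℤ => p.1 / ((p.2 : ℝ) + 1/2)) '' (K ×ˢ Set.univ)).Countable :=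
      (hct.prod Set.countable_univ).image _
    have := hcnt.mono hsub
    rw [← Cardinal.le_aleph0_iff_set_countable, Cardinal.mk_Ioo_real hε] at this
    exact absurd (this.trans_lt Cardinal.aleph0_lt_continuum) (lt_irrefl _)
  obtain ⟨δ, hδIoo, hδgood⟩ := Set.not_subset.mp hbad
  obtain ⟨hδ0, hδε⟩ := hδIoo
  have hδne : δ ≠ 0 := ne_of_gt hδ0
  have hgood : ∀ t ∈ K, ∀ k : ℤ, t ≠ ((k : ℝ) + 1/2) * δ := by
    intro t ht k hk
    refine hδgood ⟨(t, k), ⟨ht, Set.mem_univ _⟩, ?_⟩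
    have hk2 : ((k:ℝ) + 1/2) ≠ 0 := by
      intro h0
      have : (2*k : ℝ) = -1 := by linarith
      have : (2*k : ℤ) = -1 := by exact_mod_cast this
      omega
    show t / ((k:ℝ) + 1/2) = δ
    rw [hk, mul_comm, mul_div_assoc, div_self hk2, mul_one]
  set f : ℝ → ℝ := fun t => δ * (round (t / δ) : ℤ) with hf
  have hf0 : f 0 = 0 := by simp [hf]
  -- continuity on K
  have hfc : ContinuousOn f K := by
    intro t ht
    have hnotint : t / δ + 1/2 ∉ Set.range ((↑) : ℤ → ℝ) := by
      rintro ⟨k, hk⟩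
      refine hgood t ht (k - 1) ?_
      push_cast
      field_simp at hk ⊢
      linarith
    set n : ℤ := ⌊t / δ + 1/2⌋ with hn
    have hlt1 : (n : ℝ) < t / δ + 1/2 :=
      lt_of_le_of_ne (Int.floor_le _) (fun h => hnotint ⟨n, h⟩)
    have hlt2 : t / δ + 1/2 < (n : ℝ) + 1 := Int.lt_floor_add_one _
    have hU : IsOpen {s : ℝ | (n:ℝ) < s / δ + 1/2 ∧ s / δ + 1/2 < (n:ℝ) + 1} := by
      have hcont : Continuous fun s : ℝ => s / δ + 1/2 := by continuity
      exact (isOpen_Ioo.preimage hcont)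
    have hmem : t ∈ {s : ℝ | (n:ℝ) < s / δ + 1/2 ∧ s / δ + 1/2 < (n:ℝ) + 1} := ⟨hlt1, hlt2⟩
    have heq : ∀ s ∈ {s : ℝ | (n:ℝ) < s / δ + 1/2 ∧ s / δ + 1/2 < (n:ℝ) + 1}, f s = δ * n := by
      intro s hs
      have : round (s / δ) = n := by
        rw [round_eq, Int.floor_eq_iff]
        exact ⟨le_of_lt hs.1, by push_cast; exact hs.2⟩
      rw [hf]; simp only []; rw [this]
    have : ContinuousAt f t := by
      refine ContinuousAt.congr (continuousAt_const (y := δ * n)) ?_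
      filter_upwards [hU.mem_nhds hmem] with s hs
      exact (heq s hs).symm
    exact this.continuousWithinAt
  -- the approximant
  have hy : IsSelfAdjoint (cfcₙ f x) := cfcₙ_predicate f x
  refine ⟨cfcₙ f x, hy, ?_, ?_⟩
  · rw [cfcₙ_map_quasispectrum f x hfc (by exact hf0) hx]
    have himg : f '' K ⊆ (fun k : ℤ => δ * (k : ℝ)) '' ((fun t => round (t / δ)) '' K) := by
      rw [Set.image_image]
    refine Set.Finite.subset (Set.Finite.image _ ?_) himg
    -- K is bounded so the rounds form a finite set of integers
    refine Set.Finite.subset (Set.finite_Icc (-(⌈M / δ⌉ + 1)) (⌈M / δ⌉ + 1)) ?_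
    rintro k ⟨t, ht, rfl⟩
    rw [Set.mem_Icc]
    have htM : |t| ≤ M := by
      have := hM ht
      rwa [Metric.mem_closedBall, Real.dist_eq, sub_zero] at this
    have hM0 : 0 ≤ M := le_trans (abs_nonneg t) htM
    have h1 : |(round (t / δ) : ℝ)| ≤ M / δ + 1/2 := by
      have h2 : |t / δ| ≤ M / δ := by
        rw [abs_div, abs_of_pos hδ0]
        gcongr
      have h4 := abs_sub_round (t/δ)
      have h5 : |(round (t/δ) : ℝ)| - |t/δ| ≤ |t/δ - (round (t/δ) : ℝ)| := by
        rw [abs_sub_comm]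
        exact abs_sub_abs_le_abs_sub _ _
      linarith
    have hceil : M / δ + 1/2 ≤ ((⌈M / δ⌉ + 1 : ℤ) : ℝ) := by
      push_cast
      linarith [Int.le_ceil (M / δ)]
    have habs : |(round (t / δ) : ℝ)| ≤ ((⌈M / δ⌉ + 1 : ℤ) : ℝ) := h1.trans hceil
    rw [abs_le] at habs
    constructor
    · exact_mod_cast habs.1
    · exact_mod_cast habs.2
  · have hsub : cfcₙ f x - x = cfcₙ (fun t => f t - t) x := by
      have h6 := cfcₙ_sub f (fun t : ℝ => t) x hfc hf0 continuousOn_id rfl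
      rw [cfcₙ_id' ℝ x] at h6
      exact h6.symm
    rw [hsub]
    refine lt_of_le_of_lt (norm_cfcₙ_le (fun t ht => ?_)) (by linarith : δ/2 < ε)
    have hcancel : δ * (t/δ) = t := by field_simp
    have : f t - t = δ * ((round (t/δ) : ℝ) - t/δ) := by
      rw [hf]; simp only []; rw [mul_sub, hcancel]
    rw [this, Real.norm_eq_abs, abs_mul, abs_of_pos hδ0, abs_sub_comm]
    calc δ * |t/δ - (round (t/δ) : ℝ)| ≤ δ * (1/2) := by
          exact mul_le_mul_of_nonneg_left (abs_sub_round _) (le_of_lt hδ0)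
      _ = δ/2 := by ring

set_option maxHeartbeats 1000000 in
lemma aux_reverse (hFS : ∀ B : NonUnitalStarSubalgebra ℂ A, IsClosed (B : Set A) →
      TopologicalSpace.SeparableSpace B → (∀ x y : B, x * y = y * x) → HasFS B)
    (x : A) (hx : IsSelfAdjoint x) : (quasispectrum ℂ x).Countable := by
  by_contra hcount
  have hctR : ¬ (quasispectrum ℝ x).Countable := by
    intro h
    rw [← hx.quasispectrumRestricts.algebraMap_image] at hcount
    exact hcount (h.image _)
  have hKclosed : IsClosed (quasispectrum ℝ x) :=
    (isCompact_iff_compactSpace.mpr inferInstance).isClosed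
  obtain ⟨f, hfc, hf0, a, hIcc⟩ := aux_interval hKclosed hctR
  -- the element with an interval in its quasispectrum
  set y : A := cfcₙ f x with hy
  have hysa : IsSelfAdjoint y := cfcₙ_predicate f x
  have hyspec : quasispectrum ℝ y = f '' quasispectrum ℝ x :=
    cfcₙ_map_quasispectrum f x hfc.continuousOn (by exact hf0) hx
  haveI hyn : IsStarNormal y := hysa.isStarNormal
  -- the subalgebra generated by y
  set Φ : C(quasispectrum ℂ y, ℂ)₀ →⋆ₙₐ[ℂ] A := cfcₙHom hyn with hΦ
  have hΦiso : Isometry Φ := isometry_cfcₙHom y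
  set B : NonUnitalStarSubalgebra ℂ A := NonUnitalStarAlgHom.range Φ with hBdef
  have hB : IsClosed (B : Set A) := hΦiso.isClosedEmbedding.isClosed_range
  haveI : IsClosed (B : Set A) := hB
  have hsep : TopologicalSpace.SeparableSpace B := by
    haveI : SecondCountableTopology C(quasispectrum ℂ y, ℂ)₀ :=
      ContinuousMapZero.isEmbedding_toContinuousMap.secondCountableTopology
    have hsurj : Function.Surjective
        (fun g : C(quasispectrum ℂ y, ℂ)₀ => (⟨Φ g, ⟨g, rfl⟩⟩ : B)) := by
      rintro ⟨-, g, rfl⟩; exact ⟨g, rfl⟩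
    exact hsurj.denseRange.separableSpace (hΦiso.continuous.subtype_mk _)
  have hcomm : ∀ z w : B, z * w = w * z := by
    rintro ⟨-, g, rfl⟩ ⟨-, g', rfl⟩
    ext
    show Φ g * Φ g' = Φ g' * Φ g
    rw [← map_mul, ← map_mul, mul_comm]
  -- y as an element of B
  set idz : C(quasispectrum ℂ y, ℂ)₀ :=
    ⟨ContinuousMap.restrict _ (ContinuousMap.id ℂ), rfl⟩ with hidz
  have hΦid : Φ idz = y := cfcₙHom_id hyn
  have hymem : y ∈ B := ⟨idz, hΦid⟩
  set yB : B := ⟨y, hymem⟩ with hyB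
  have hyBsa : IsSelfAdjoint yB := Subtype.ext hysa
  obtain ⟨z, ⟨hzsa, hzfin⟩, hdist⟩ :=
    Metric.mem_closure_iff.mp (hFS B hB hsep hcomm yB hyBsa) (1/2) (by norm_num)
  -- z = Φ g for some g with finite range
  obtain ⟨g, hg⟩ : ∃ g, Φ g = (z : A) := z.2
  have hzfinA : (quasispectrum ℂ (z : A)).Finite := by
    rwa [← aux_quasispectrum_eq B hB z]
  have hrangefin : (Set.range g).Finite := by
    rwa [← hg, hΦ, cfcₙHom_map_quasispectrum hyn g] at hzfinA
  -- the interval sits inside the complex quasispectrum of y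
  have hmem : ∀ r ∈ Set.Icc a (a+1), ((r : ℂ)) ∈ quasispectrum ℂ y := by
    intro r hr
    rw [← hysa.quasispectrumRestricts.algebraMap_image]
    exact ⟨r, hyspec ▸ hIcc hr, rfl⟩
  classical
  -- G r = Re (g r) on the interval
  set fC : ℂ → ℂ := fun w => if hw : w ∈ quasispectrum ℂ y then g ⟨w, hw⟩ else 0 with hfCdef
  have hfCres : Set.restrict (quasispectrum ℂ y) fC = ⇑g := by
    funext w
    simp [hfCdef, Set.restrict, dif_pos w.2]
  have hfCc : ContinuousOn fC (quasispectrum ℂ y) := by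
    rw [continuousOn_iff_continuous_restrict, show (quasispectrum ℂ y).domRestrict fC = ⇑g from hfCres]
    exact map_continuous g
  set G : ℝ → ℝ := fun r => (fC (r : ℂ)).re with hGdef
  have hGval : ∀ r (hr : r ∈ Set.Icc a (a+1)), G r = (g ⟨(r:ℂ), hmem r hr⟩).re := by
    intro r hr
    simp [hGdef, hfCdef, dif_pos (hmem r hr)]
  have hGc : ContinuousOn G (Set.Icc a (a+1)) := by
    refine Complex.continuous_re.comp_continuousOn ?_
    exact hfCc.comp Complex.continuous_ofReal.continuousOn (fun r hr => hmem r hr)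
  have himgsub : G '' Set.Icc a (a+1) ⊆ Complex.re '' Set.range g := by
    rintro - ⟨r, hr, rfl⟩
    exact ⟨g ⟨(r:ℂ), hmem r hr⟩, Set.mem_range_self _, (hGval r hr).symm⟩
  have himgfin : (G '' Set.Icc a (a+1)).Finite :=
    (hrangefin.image _).subset himgsub
  have hconn : IsPreconnected (G '' Set.Icc a (a+1)) :=
    isPreconnected_Icc.image G hGc
  have hsub : (G '' Set.Icc a (a+1)).Subsingleton := by
    by_contra hns
    rw [Set.not_subsingleton_iff] at hns
    obtain ⟨u, hu, v, hv, huv⟩ := hns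
    rcases huv.lt_or_gt with hlt | hlt
    · exact (Set.Icc_infinite hlt) (himgfin.subset (hconn.ordConnected.out hu hv))
    · exact (Set.Icc_infinite hlt) (himgfin.subset (hconn.ordConnected.out hv hu))
  have haIcc : a ∈ Set.Icc a (a+1) := ⟨le_rfl, by linarith⟩
  have hbIcc : a + 1 ∈ Set.Icc a (a+1) := ⟨by linarith, le_rfl⟩
  have hGconst : G (a+1) = G a :=
    hsub (Set.mem_image_of_mem G hbIcc) (Set.mem_image_of_mem G haIcc)
  -- one of the endpoints is at distance ≥ 1/2
  have hkey : ∃ r ∈ Set.Icc a (a+1), 1/2 ≤ |G r - r| := by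
    by_contra hc
    push_neg at hc
    have h1 := hc a haIcc
    have h2 := hc (a+1) hbIcc
    rw [hGconst] at h2
    have h3 := abs_lt.mp h1
    have h4 := abs_lt.mp h2
    linarith
  obtain ⟨r, hr, hrbound⟩ := hkey
  -- translate into a norm bound
  have h5 : Φ (g - idz) = (z : A) - y := by rw [map_sub, hg, hΦid]
  have hnorm : ‖(z : A) - y‖ = ‖g - idz‖ := by
    rw [← h5, hΦ]
    exact norm_cfcₙHom y _
  set w : quasispectrum ℂ y := ⟨(r : ℂ), hmem r hr⟩ with hw
  have happly : ‖g - idz‖ ≥ 1/2 := by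
    have h3 : ‖(g - idz : C(quasispectrum ℂ y, ℂ)₀) w‖ ≤ ‖g - idz‖ := by
      rw [ContinuousMapZero.norm_def]
      exact ContinuousMap.norm_coe_le_norm _ w
    refine le_trans ?_ h3
    have h4 : (g - idz : C(quasispectrum ℂ y, ℂ)₀) w = g w - (r : ℂ) := by
      show g w - idz w = g w - (r : ℂ)
      congr 1
    rw [h4]
    calc (1:ℝ)/2 ≤ |G r - r| := hrbound
      _ = |(g w - (r:ℂ)).re| := by
          rw [hGval r hr]
          simp [hw]
      _ ≤ ‖g w - (r:ℂ)‖ := Complex.abs_re_le_norm _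
  have : (1:ℝ)/2 ≤ dist yB z := by
    rw [Subtype.dist_eq, dist_eq_norm, norm_sub_rev]
    show (1:ℝ)/2 ≤ ‖(z : A) - y‖
    rw [hnorm]
    exact happly
  linarith [hdist]

end Aux

theorem stmt_7 (A : Type*) [NonUnitalNormedRing A] [StarRing A] [CStarRing A]
    [NormedSpace ℂ A] [IsScalarTower ℂ A A] [SMulCommClass ℂ A A] [StarModule ℂ A]
    [CompleteSpace A] :
    IsScatteredCStarAlgebra A ↔
      ∀ B : NonUnitalStarSubalgebra ℂ A, IsClosed (B : Set A) →
        TopologicalSpace.SeparableSpace B → (∀ x y : B, x * y = y * x) → HasFS B := by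
  letI : NonUnitalCStarAlgebra A := {}
  constructor
  · intro hscat B hB _ _
    haveI : IsClosed (B : Set A) := hB
    intro x hx
    rw [Metric.mem_closure_iff]
    intro ε hε
    have hxA : IsSelfAdjoint (x : A) := by
      simpa [IsSelfAdjoint, ← Subtype.val_inj] using hx
    have hctC : (quasispectrum ℂ x).Countable := by
      rw [aux_quasispectrum_eq B hB x]
      exact hscat _ hxA
    have hct : (quasispectrum ℝ x).Countable := by
      rw [← hx.quasispectrumRestricts.image]
      exact hctC.image _
    obtain ⟨y, hy, hyfin, hyx⟩ := aux_approx (x : B) hx hct hε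
    refine ⟨y, ⟨hy, ?_⟩, ?_⟩
    · rw [← hy.quasispectrumRestricts.algebraMap_image]
      exact hyfin.image _
    · rwa [dist_eq_norm, norm_sub_rev]
  · exact fun hFS x hx => aux_reverse hFS x hx
end

section
/- Let Ω be a compact Hausdorff topological space. Then Ω is a scattered topological space if and only if every self-adjoint element of the C*-algebra C(Ω, ℂ) has countable spectrum. -/
open Set Filter Topology

lemma not_countable_nat_bool : ¬ Countable (ℕ → Bool) := by
  intro h
  have h1 := Cardinal.mk_le_aleph0 (α := ℕ → Bool)
  have h2 : (Cardinal.mk (ℕ → Bool)) = 2 ^ Cardinal.aleph0 := by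
    rw [Cardinal.mk_arrow]; simp
  rw [h2] at h1
  exact absurd h1 (not_le.mpr (Cardinal.cantor Cardinal.aleph0))

section
variable {Ω : Type*} [TopologicalSpace Ω] [CompactSpace Ω] [T2Space Ω]

lemma split_lemma {T : Set Ω} (hacc : ∀ x ∈ T, x ∈ closure (T \ {x}))
    {V : Set Ω} (hV : IsOpen V) (hne : (V ∩ T).Nonempty) :
    ∃ V₀ V₁ : Set Ω, IsOpen V₀ ∧ IsOpen V₁ ∧ (V₀ ∩ T).Nonempty ∧ (V₁ ∩ T).Nonempty ∧
      closure V₀ ⊆ V ∧ closure V₁ ⊆ V ∧ Disjoint (closure V₀) (closure V₁) := by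
  obtain ⟨x, hxV, hxT⟩ := hne
  have hmem : (V ∩ (T \ {x})).Nonempty := by
    have h1 := hacc x hxT
    rw [mem_closure_iff] at h1
    exact h1 V hV hxV
  obtain ⟨y, hyV, hyT, hyx⟩ := hmem
  have hxy : x ≠ y := fun h => hyx (h ▸ rfl)
  obtain ⟨W₀, W₁, hW₀, hW₁, hxW, hyW, hWd⟩ := t2_separation hxy
  obtain ⟨t₀, ht₀n, ht₀c, ht₀s⟩ := exists_mem_nhds_isClosed_subset
    ((hV.inter hW₀).mem_nhds ⟨hxV, hxW⟩)
  obtain ⟨t₁, ht₁n, ht₁c, ht₁s⟩ := exists_mem_nhds_isClosed_subset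
    ((hV.inter hW₁).mem_nhds ⟨hyV, hyW⟩)
  refine ⟨interior t₀, interior t₁, isOpen_interior, isOpen_interior,
    ⟨x, mem_interior_iff_mem_nhds.mpr ht₀n, hxT⟩,
    ⟨y, mem_interior_iff_mem_nhds.mpr ht₁n, hyT⟩, ?_, ?_, ?_⟩
  · exact (closure_minimal interior_subset ht₀c).trans (ht₀s.trans inter_subset_left)
  · exact (closure_minimal interior_subset ht₁c).trans (ht₁s.trans inter_subset_left)
  · apply Set.disjoint_of_subset
      ((closure_minimal interior_subset ht₀c).trans (ht₀s.trans inter_subset_right))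
      ((closure_minimal interior_subset ht₁c).trans (ht₁s.trans inter_subset_right))
    exact hWd

lemma exists_uncountable_range {T : Set Ω} (hTne : T.Nonempty)
    (hacc : ∀ x ∈ T, x ∈ closure (T \ {x})) :
    ∃ g : C(Ω, ℝ), ¬ (Set.range g).Countable := by
  classical
  have key : ∀ V : {V : Set Ω // IsOpen V ∧ (V ∩ T).Nonempty},
      ∃ p : {V : Set Ω // IsOpen V ∧ (V ∩ T).Nonempty} ×
            {V : Set Ω // IsOpen V ∧ (V ∩ T).Nonempty},
        closure p.1.1 ⊆ V.1 ∧ closure p.2.1 ⊆ V.1 ∧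
          Disjoint (closure p.1.1) (closure p.2.1) := by
    rintro ⟨V, hV, hne⟩
    obtain ⟨V₀, V₁, h1, h2, h3, h4, h5, h6, h7⟩ := split_lemma hacc hV hne
    exact ⟨(⟨V₀, h1, h3⟩, ⟨V₁, h2, h4⟩), h5, h6, h7⟩
  choose c hc1 hc2 hc3 using key
  let root : {V : Set Ω // IsOpen V ∧ (V ∩ T).Nonempty} :=
    ⟨Set.univ, isOpen_univ, by simpa using hTne⟩
  let D : List Bool → {V : Set Ω // IsOpen V ∧ (V ∩ T).Nonempty} :=
    fun s => List.rec root (fun b _ ih => Bool.rec (c ih).1 (c ih).2 b) s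
  have hDf : ∀ s, D (false :: s) = (c (D s)).1 := fun s => rfl
  have hDt : ∀ s, D (true :: s) = (c (D s)).2 := fun s => rfl
  have hsub : ∀ (b : Bool) (s), closure (D (b :: s)).1 ⊆ (D s).1 := by
    intro b s
    cases b
    · rw [hDf]; exact hc1 _
    · rw [hDt]; exact hc2 _
  have hdisj : ∀ s, Disjoint (closure (D (false :: s)).1) (closure (D (true :: s)).1) := by
    intro s; rw [hDf, hDt]; exact hc3 _
  have hpd : ∀ s t : List Bool, s.length = t.length → s ≠ t →
      Disjoint (closure (D s).1) (closure (D t).1) := by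
    intro s
    induction s with
    | nil =>
      intro t hl hne
      cases t
      · exact absurd rfl hne
      · simp at hl
    | cons b s ih =>
      intro t hl hne
      cases t with
      | nil => simp at hl
      | cons b' t =>
        simp only [List.length_cons, Nat.add_right_cancel_iff] at hl
        by_cases hst : s = t
        · subst hst
          have hbb : b ≠ b' := fun h => hne (by rw [h])
          cases b <;> cases b'
          · exact absurd rfl hbb
          · exact hdisj s
          · exact (hdisj s).symm
          · exact absurd rfl hbb
        · exact Set.disjoint_of_subset ((hsub b s).trans subset_closure)
            ((hsub b' t).trans subset_closure) (ih t hl hst)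
  -- sequences
  let L : (ℕ → Bool) → ℕ → List Bool := fun a n => Nat.rec [] (fun m ih => a m :: ih) n
  have hLsucc : ∀ a n, L a (n + 1) = a n :: L a n := fun a n => rfl
  have hLlen : ∀ a n, (L a n).length = n := by
    intro a n
    induction n with
    | zero => rfl
    | succ n ihn => rw [hLsucc, List.length_cons, ihn]
  let K : (ℕ → Bool) → ℕ → Set Ω := fun a n => closure (D (L a n)).1
  have hKc : ∀ a n, IsClosed (K a n) := fun a n => isClosed_closure
  have hKne : ∀ a n, (K a n).Nonempty := fun a n =>
    ((D (L a n)).2.2).mono (inter_subset_left.trans subset_closure)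
  have hKsub : ∀ a n, K a (n + 1) ⊆ K a n := by
    intro a n
    have h1 : K a (n + 1) ⊆ (D (L a n)).1 := by
      show closure (D (L a (n+1))).1 ⊆ _
      rw [hLsucc]
      exact hsub _ _
    exact h1.trans subset_closure
  have hKinter : ∀ a : ℕ → Bool, (⋂ n, K a n).Nonempty := fun a =>
    IsCompact.nonempty_iInter_of_sequence_nonempty_isCompact_isClosed _ (hKsub a) (hKne a)
      ((hKc a 0).isCompact) (hKc a)
  choose xa hxa using hKinter
  -- Urysohn functions
  let A : ℕ → Set Ω := fun n => ⋃ s ∈ {s : List Bool | s.length = n}, closure (D (false :: s)).1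
  let B : ℕ → Set Ω := fun n => ⋃ s ∈ {s : List Bool | s.length = n}, closure (D (true :: s)).1
  have hAc : ∀ n, IsClosed (A n) :=
    fun n => (List.finite_length_eq Bool n).isClosed_biUnion (fun _ _ => isClosed_closure)
  have hBc : ∀ n, IsClosed (B n) :=
    fun n => (List.finite_length_eq Bool n).isClosed_biUnion (fun _ _ => isClosed_closure)
  have hABd : ∀ n, Disjoint (A n) (B n) := by
    intro n
    rw [Set.disjoint_left]
    rintro x hxA hxB
    simp only [A, B, mem_iUnion, mem_setOf_eq] at hxA hxB
    obtain ⟨s, hs, hxs⟩ := hxA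
    obtain ⟨t, ht, hxt⟩ := hxB
    have hd := hpd (false :: s) (true :: t) (by simp [hs, ht]) (by simp)
    exact Set.disjoint_left.mp hd hxs hxt
  have hgex : ∀ n, ∃ g : C(Ω, ℝ), EqOn g 0 (A n) ∧ EqOn g 1 (B n) ∧
      ∀ x, g x ∈ Icc (0 : ℝ) 1 :=
    fun n => exists_continuous_zero_one_of_isClosed (hAc n) (hBc n) (hABd n)
  choose g hg0 hg1 hg01 using hgex
  -- sum up
  have hgnorm : ∀ n, ‖g n‖ ≤ 1 := by
    intro n
    rw [ContinuousMap.norm_le _ zero_le_one]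
    intro x
    rw [Real.norm_eq_abs, abs_le]
    exact ⟨by linarith [(hg01 n x).1], (hg01 n x).2⟩
  have hgeo : Summable (fun n : ℕ => (3⁻¹ : ℝ) ^ (n + 1)) := by
    have hgeo0 : Summable (fun n : ℕ => (3⁻¹ : ℝ) * 3⁻¹ ^ n) :=
      (summable_geometric_of_lt_one (by norm_num) (by norm_num)).mul_left _
    refine hgeo0.congr fun n => ?_
    ring
  have hle : ∀ n, ‖(3⁻¹ : ℝ) ^ (n + 1) • g n‖ ≤ (3⁻¹ : ℝ) ^ (n + 1) := by
    intro n
    rw [ContinuousMap.norm_le _ (by positivity)]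
    intro x
    rw [ContinuousMap.smul_apply, smul_eq_mul, Real.norm_eq_abs, abs_mul,
      abs_of_nonneg (show (0:ℝ) ≤ 3⁻¹ ^ (n + 1) by positivity)]
    have h1 : |(g n) x| ≤ 1 := by
      rw [abs_le]
      exact ⟨by linarith [(hg01 n x).1], (hg01 n x).2⟩
    nlinarith [pow_pos (show (0:ℝ) < 3⁻¹ by norm_num) (n + 1)]
  have hsum : Summable (fun n => (3⁻¹ : ℝ) ^ (n + 1) • g n) :=
    Summable.of_norm (Summable.of_nonneg_of_le (fun n => norm_nonneg _) hle hgeo)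
  let f : C(Ω, ℝ) := ∑' n, (3⁻¹ : ℝ) ^ (n + 1) • g n
  have hfx : ∀ x, f x = ∑' n, (3⁻¹ : ℝ) ^ (n + 1) * g n x := by
    intro x
    rw [show f x = (∑' n, (3⁻¹ : ℝ) ^ (n + 1) • g n) x from rfl,
      ← ContinuousMap.tsum_apply hsum x]
    exact tsum_congr fun n => by simp [smul_eq_mul]
  have hgval : ∀ (a : ℕ → Bool) n, g n (xa a) = cond (a n) 1 0 := by
    intro a n
    have hx : xa a ∈ K a (n + 1) := mem_iInter.mp (hxa a) (n + 1)
    have hx' : xa a ∈ closure (D (a n :: L a n)).1 := by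
      rw [show K a (n+1) = closure (D (L a (n+1))).1 from rfl, hLsucc] at hx
      exact hx
    cases h : a n
    · rw [h] at hx'
      have hmem : xa a ∈ A n := by
        simp only [A, mem_iUnion, mem_setOf_eq]
        exact ⟨L a n, hLlen a n, hx'⟩
      simpa using hg0 n hmem
    · rw [h] at hx'
      have hmem : xa a ∈ B n := by
        simp only [B, mem_iUnion, mem_setOf_eq]
        exact ⟨L a n, hLlen a n, hx'⟩
      simpa using hg1 n hmem
  have hfval : ∀ a : ℕ → Bool, f (xa a) = 3⁻¹ * Cardinal.cantorFunction 3⁻¹ a := by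
    intro a
    rw [hfx, Cardinal.cantorFunction, ← tsum_mul_left]
    refine tsum_congr fun n => ?_
    rw [hgval a n]
    cases h : a n <;>
      simp [Cardinal.cantorFunctionAux, h] <;> ring
  have hinj : Function.Injective (fun a : ℕ → Bool => f (xa a)) := by
    intro a b hab
    simp only [hfval] at hab
    exact Cardinal.cantorFunction_injective (by norm_num) (by norm_num)
      (mul_left_cancel₀ (by norm_num) hab)
  refine ⟨f, fun hcount => not_countable_nat_bool ?_⟩
  have h1 : (Set.range fun a : ℕ → Bool => f (xa a)).Countable := by
    apply hcount.mono
    rintro z ⟨a, rfl⟩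
    exact ⟨xa a, rfl⟩
  haveI := h1.to_subtype
  exact Countable.of_equiv _ (Equiv.ofInjective _ hinj).symm



lemma fwd_aux (hs : ∀ S : Set Ω, S.Nonempty → ∃ x ∈ S, nhdsWithin x (S \ {x}) = ⊥)
    (g : C(Ω, ℝ)) : (Set.range g).Countable := by
  by_contra hunc
  have hcr : IsCompact (Set.range g) := isCompact_range g.continuous
  obtain ⟨P, hP, hPne, hPsub⟩ :=
    exists_perfect_nonempty_of_isClosed_of_not_countable hcr.isClosed hunc
  set S := {C : Set Ω | IsClosed C ∧ P ⊆ g '' C} with hSdef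
  have hUS : (univ : Set Ω) ∈ S := ⟨isClosed_univ, by rw [image_univ]; exact hPsub⟩
  have hchain : ∀ ch ⊆ S, IsChain (· ⊆ ·) ch → ch.Nonempty →
      ∃ lb ∈ S, ∀ s ∈ ch, lb ⊆ s := by
    intro ch hchS hch hchne
    refine ⟨⋂₀ ch, ⟨isClosed_sInter (fun C hC => (hchS hC).1), ?_⟩,
      fun s hs' => sInter_subset_of_mem hs'⟩
    intro p hp
    haveI : Nonempty ch := hchne.to_subtype
    have hne : (⋂ C : ch, (C.1 ∩ g ⁻¹' {p})).Nonempty := by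
      apply IsCompact.nonempty_iInter_of_directed_nonempty_isCompact_isClosed
      · rintro ⟨C, hC⟩ ⟨C', hC'⟩
        rcases hch.total hC hC' with hsub | hsub
        · exact ⟨⟨C, hC⟩, Subset.rfl, inter_subset_inter_left _ hsub⟩
        · exact ⟨⟨C', hC'⟩, inter_subset_inter_left _ hsub, Subset.rfl⟩
      · rintro ⟨C, hC⟩
        obtain ⟨x, hx, hgx⟩ := (hchS hC).2 hp
        exact ⟨x, hx, hgx⟩
      · rintro ⟨C, hC⟩
        exact ((hchS hC).1.inter (isClosed_singleton.preimage g.continuous)).isCompact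
      · rintro ⟨C, hC⟩
        exact (hchS hC).1.inter (isClosed_singleton.preimage g.continuous)
    obtain ⟨x, hx⟩ := hne
    rw [mem_iInter] at hx
    refine ⟨x, ?_, ?_⟩
    · rw [mem_sInter]; intro C hC; exact (hx ⟨C, hC⟩).1
    · obtain ⟨C0, hC0⟩ := hchne
      exact (hx ⟨C0, hC0⟩).2
  obtain ⟨m, -, hm⟩ := zorn_superset_nonempty S hchain univ hUS
  have hmS : m ∈ S := hm.1
  have hmne : m.Nonempty := by
    obtain ⟨p, hp⟩ := hPne
    obtain ⟨x, hx, -⟩ := hmS.2 hp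
    exact ⟨x, hx⟩
  obtain ⟨x, hxm, hxiso⟩ := hs m hmne
  have hm'c : IsClosed (m \ {x}) := by
    apply isClosed_of_closure_subset
    intro y hy
    have hym : y ∈ m := hmS.1.closure_subset (closure_mono diff_subset hy)
    refine ⟨hym, ?_⟩
    intro hyx
    rw [mem_singleton_iff] at hyx
    subst hyx
    rw [mem_closure_iff_nhdsWithin_neBot, hxiso] at hy
    exact hy.ne rfl
  have hnsub : ¬ P ⊆ g '' (m \ {x}) := by
    intro hsub
    have hle := hm.2 ⟨hm'c, hsub⟩ diff_subset
    exact (hle hxm).2 rfl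
  obtain ⟨p, hpP, hpnot⟩ := not_subset.mp hnsub
  have himc : IsClosed (g '' (m \ {x})) := (hm'c.isCompact.image g.continuous).isClosed
  have hU : (g '' (m \ {x}))ᶜ ∈ 𝓝 p := himc.isOpen_compl.mem_nhds hpnot
  have hacc := hP.acc p hpP
  rw [accPt_iff_nhds] at hacc
  obtain ⟨q, ⟨hqU, hqP⟩, hqp⟩ := hacc _ hU
  have key : ∀ r ∈ P, r ∉ g '' (m \ {x}) → r = g x := by
    intro r hr hrnot
    obtain ⟨z, hzm, hzr⟩ := hmS.2 hr
    by_cases hz : z = x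
    · rw [← hzr, hz]
    · exact absurd ⟨z, ⟨hzm, hz⟩, hzr⟩ hrnot
  exact hqp ((key q hqP hqU).trans (key p hpP hpnot).symm)

end


theorem stmt_10 (Ω : Type*) [TopologicalSpace Ω] [CompactSpace Ω] [T2Space Ω] :
    IsScatteredSpace Ω ↔
      ∀ f : C(Ω, ℂ), IsSelfAdjoint f → (spectrum ℂ f).Countable := by
  constructor
  · intro hs f hf
    have hreal : ∀ x, ((starRingEnd ℂ) (f x)) = f x := by
      intro x
      have h1 : (star f) x = f x := by rw [hf.star_eq]
      simpa using h1
    let g : C(Ω, ℝ) := ⟨fun x => (f x).re, Complex.continuous_re.comp f.continuous⟩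
    have heq : ∀ x, f x = Complex.ofReal (g x) := by
      intro x
      have him : (f x).im = 0 := Complex.conj_eq_iff_im.mp (hreal x)
      exact Complex.ext rfl (by simpa using him)
    rw [ContinuousMap.spectrum_eq_range]
    have hran : Set.range (⇑f) = Complex.ofReal '' Set.range g := by
      ext z
      constructor
      · rintro ⟨x, rfl⟩
        exact ⟨g x, ⟨x, rfl⟩, (heq x).symm⟩
      · rintro ⟨r, ⟨x, rfl⟩, rfl⟩
        exact ⟨x, heq x⟩
    rw [hran]
    exact (fwd_aux hs g).image _
  · intro h
    by_contra hns
    rw [IsScatteredSpace] at hns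
    push_neg at hns
    obtain ⟨S, hSne, hSiso⟩ := hns
    have hacc : ∀ x ∈ closure S, x ∈ closure (closure S \ {x}) := by
      intro x hx
      rw [mem_closure_iff_nhdsWithin_neBot]
      have h1 : (nhdsWithin x (S \ {x})).NeBot := by
        by_cases hxS : x ∈ S
        · exact hSiso x hxS
        · rw [Set.diff_singleton_eq_self hxS]
          exact mem_closure_iff_nhdsWithin_neBot.mp hx
      exact h1.mono (nhdsWithin_mono x (Set.diff_subset_diff_left subset_closure))
    obtain ⟨g, hg⟩ := exists_uncountable_range hSne.closure hacc
    set F : C(Ω, ℂ) := ⟨fun x => Complex.ofReal (g x),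
      Complex.continuous_ofReal.comp g.continuous⟩ with hF
    have hFsa : IsSelfAdjoint F := by
      rw [IsSelfAdjoint]
      ext x
      simp [hF, Complex.conj_ofReal]
    have hc := h F hFsa
    rw [ContinuousMap.spectrum_eq_range] at hc
    apply hg
    have hsub : Set.range g ⊆ Complex.ofReal ⁻¹' (Set.range F) := by
      rintro r ⟨x, rfl⟩
      exact ⟨x, rfl⟩
    exact Set.Countable.mono hsub (hc.preimage Complex.ofReal_injective)
end
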